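/- Let 0 < α < 1, set β := 1/(1−α), and let q > 0. There exists a constant C = C(q, a, d, α), independent of Λ and x, such that for every finite set Λ ⊂ 𝒦 × ℕ₀^d and every x ∈ ℝ^d: ∑_{(R,n)∈Λ} |R|^{q − ν(1−α)/α} · 𝟙_{U(R,n)}(x) ≤ C · I_Λ(x)^q, where I_Λ(x) := max{ |R| · 𝟙_{U(R,n)}(x) : (R,n) ∈ Λ } (with the maximum over the empty set taken to be 0). -/

import Mathlib

open MeasureTheory

noncomputable section

/-- Number of outer intervals on each side at level `j`: `⌈j^{a-1}⌉`. -/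
def mOut (a : ℝ) (j : ℕ) : ℤ := ⌈(j : ℝ) ^ (a - 1)⌉

/-- Number of inner intervals at level `j`: `⌈j^{a}⌉`. -/
def mIn (a : ℝ) (j : ℕ) : ℤ := ⌈(j : ℝ) ^ a⌉

/-- Total number of intervals in the partition `𝒜_j^i`. -/
def numIv (a : ℝ) (j : ℕ) : ℤ := mIn a j + 2 * mOut a j

/-- Common length of the outer intervals. -/
def lenO (a β : ℝ) (j : ℕ) : ℝ :=
  (((j : ℝ) + 1) ^ (a * β) - (j : ℝ) ^ (a * β)) / ((mOut a j : ℤ) : ℝ)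

/-- Common length of the inner intervals. -/
def lenI (a β : ℝ) (j : ℕ) : ℝ :=
  2 * (j : ℝ) ^ (a * β) / ((mIn a j : ℤ) : ℝ)

/-- The `k`-th knot (from the left, `k = 0, …, numIv`) of the partition `𝒜_j^i` of
`A_j^i = [−(j+1)^{aβ}, (j+1)^{aβ})`: the two components of `A_j^i ∖ B_j^i` are divided
into `⌈j^{a-1}⌉` equal intervals each, and `B_j^i = [−j^{aβ}, j^{aβ})` into `⌈j^{a}⌉`
equal intervals. -/
def knot (a β : ℝ) (j : ℕ) (k : ℤ) : ℝ :=
  if k ≤ mOut a j then -((j : ℝ) + 1) ^ (a * β) + (k : ℝ) * lenO a β j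
  else if k ≤ mOut a j + mIn a j then
    -(j : ℝ) ^ (a * β) + ((k - mOut a j : ℤ) : ℝ) * lenI a β j
  else (j : ℝ) ^ (a * β) + ((k - mOut a j - mIn a j : ℤ) : ℝ) * lenO a β j

/-- The `k`-th interval of the partition `𝒜_j^i`. -/
def ivl (a β : ℝ) (j : ℕ) (k : ℤ) : Set ℝ :=
  Set.Ico (knot a β j k) (knot a β j (k + 1))

/-- The partition `𝒜_j^i` (with `a = a_i`), as a family of subsets of `ℝ`. -/
def partA (a β : ℝ) (j : ℕ) : Set (Set ℝ) :=
  {I | ∃ k : ℤ, 0 ≤ k ∧ k < numIv a j ∧ I = ivl a β j k}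

/-- The index `k` corresponds to an inner interval. -/
def isInnerIdx (a : ℝ) (j : ℕ) (k : ℤ) : Prop :=
  mOut a j ≤ k ∧ k < mOut a j + mIn a j

/-- The family `ℬ_j^i` of inner intervals. -/
def partInner (a β : ℝ) (j : ℕ) : Set (Set ℝ) :=
  {I | ∃ k : ℤ, isInnerIdx a j k ∧ I = ivl a β j k}

/-- `𝒜_j`: rectangles `I_1 × ⋯ × I_d` with `I_i ∈ 𝒜_j^i`, encoded by their factors. -/
def rectA {d : ℕ} (a : Fin d → ℝ) (β : ℝ) (j : ℕ) : Set (Fin d → Set ℝ) :=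
  {R | ∀ i, R i ∈ partA (a i) β j}

/-- `ℬ_j`: rectangles all of whose factors are inner intervals. -/
def rectB {d : ℕ} (a : Fin d → ℝ) (β : ℝ) (j : ℕ) : Set (Fin d → Set ℝ) :=
  {R | ∀ i, R i ∈ partInner (a i) β j}

/-- `𝒦_j := 𝒜_j ∖ ℬ_j` for `j ≥ 1`. -/
def rectK {d : ℕ} (a : Fin d → ℝ) (β : ℝ) (j : ℕ) : Set (Fin d → Set ℝ) :=
  rectA a β j \ rectB a β j

/-- `𝒦_0 := {[−1,1)^d}`. -/
def rectK0 (d : ℕ) : Set (Fin d → Set ℝ) := {fun _ => Set.Ico (-1 : ℝ) 1}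

/-- `𝒦 := ⋃_{j ≥ 0} 𝒦_j`. -/
def rectKall {d : ℕ} (a : Fin d → ℝ) (β : ℝ) : Set (Fin d → Set ℝ) :=
  rectK0 d ∪ ⋃ (j : ℕ) (_ : 1 ≤ j), rectK a β j

/-- The volume `|R|` of a rectangle, the product of its side lengths. -/
def rVol {d : ℕ} (R : Fin d → Set ℝ) : ℝ := ∏ i, (volume (R i)).toReal

/-- The Euclidean norm on `ℝ^d`. -/
def euclNorm {d : ℕ} (x : Fin d → ℝ) : ℝ := Real.sqrt (∑ i, (x i) ^ 2)

/-- The anisotropic dilation `t^{-a} x`. -/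
def aDilNeg {d : ℕ} (a : Fin d → ℝ) (t : ℝ) (x : Fin d → ℝ) : Fin d → ℝ :=
  fun i => t ^ (-(a i)) * x i

/-- `nrm` is the anisotropic quasi-norm `|·|_a`. -/
def IsAnisoNorm {d : ℕ} (a : Fin d → ℝ) (nrm : (Fin d → ℝ) → ℝ) : Prop :=
  nrm 0 = 0 ∧ ∀ x : Fin d → ℝ, x ≠ 0 → 0 < nrm x ∧ euclNorm (aDilNeg a (nrm x) x) = 1

/-- `U(R,n) = { y : |δ_R y − π(n + (1/2,…,1/2))|_a < 1 }`, where
`δ_R = diag(|I_1|, …, |I_d|)` for `R = I_1 × ⋯ × I_d`. -/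
def Uset {d : ℕ} (nrm : (Fin d → ℝ) → ℝ) (R : Fin d → Set ℝ) (n : Fin d → ℕ) :
    Set (Fin d → ℝ) :=
  {y | nrm (fun i => (volume (R i)).toReal * y i - Real.pi * ((n i : ℝ) + 1 / 2)) < 1}

section Aux

open Real Finset

variable {a β : ℝ} {j : ℕ}

lemma jpos (hj : 1 ≤ j) : (0:ℝ) < (j:ℝ) := by exact_mod_cast hj
lemma jone (hj : 1 ≤ j) : (1:ℝ) ≤ (j:ℝ) := by exact_mod_cast hj

lemma mIn_pos (hj : 1 ≤ j) : 0 < mIn a j :=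
  Int.ceil_pos.mpr (Real.rpow_pos_of_pos (jpos hj) a)

lemma mOut_pos (hj : 1 ≤ j) : 0 < mOut a j :=
  Int.ceil_pos.mpr (Real.rpow_pos_of_pos (jpos hj) _)

lemma mIn_le (ha : 1 ≤ a) (hj : 1 ≤ j) : ((mIn a j : ℤ) : ℝ) ≤ 2 * (j:ℝ) ^ a := by
  have h1 : (1:ℝ) ≤ (j:ℝ) ^ a := Real.one_le_rpow (jone hj) (by linarith)
  have := Int.ceil_lt_add_one ((j:ℝ) ^ a)
  unfold mIn; linarith

lemma mOut_le (ha : 1 ≤ a) (hj : 1 ≤ j) : ((mOut a j : ℤ) : ℝ) ≤ 2 * (j:ℝ) ^ (a - 1) := by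
  have h1 : (1:ℝ) ≤ (j:ℝ) ^ (a-1) := Real.one_le_rpow (jone hj) (by linarith)
  have := Int.ceil_lt_add_one ((j:ℝ) ^ (a-1))
  unfold mOut; linarith

lemma mIn_ge : (j:ℝ) ^ a ≤ ((mIn a j : ℤ) : ℝ) := Int.le_ceil _
lemma mOut_ge : (j:ℝ) ^ (a-1) ≤ ((mOut a j : ℤ) : ℝ) := Int.le_ceil _

/-- Bernoulli: lower bound for `(t+1)^s − t^s`, `s ≥ 1`. -/
lemma bern_lower {t s : ℝ} (ht : 0 < t) (hs : 1 ≤ s) :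
    s * t ^ (s-1) ≤ (t+1) ^ s - t ^ s := by
  have hx : (-1:ℝ) ≤ 1/t := by
    have : (0:ℝ) ≤ 1/t := by positivity
    linarith
  have hb := one_add_mul_self_le_rpow_one_add hx hs
  have hbase : (1 + 1/t) * t = t + 1 := by field_simp
  have h2 : (t+1) ^ s = (1 + 1/t) ^ s * t ^ s := by
    rw [← Real.mul_rpow (by positivity) ht.le, hbase]
  have hts : (0:ℝ) < t ^ s := Real.rpow_pos_of_pos ht _
  have h4 : (1 + s * (1/t)) * t ^ s ≤ (t+1) ^ s := by
    rw [h2]; exact mul_le_mul_of_nonneg_right hb hts.le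
  have h3 : t ^ s * (1/t) = t ^ (s-1) := by
    rw [Real.rpow_sub ht, Real.rpow_one]; ring
  have h5 : (1 + s * (1/t)) * t ^ s = t ^ s + s * (t ^ s * (1/t)) := by ring
  rw [h5, h3] at h4; linarith

/-- Bernoulli: upper bound for `(t+1)^s − t^s`, `s ≥ 1`. -/
lemma bern_upper {t s : ℝ} (ht : 0 ≤ t) (hs : 1 ≤ s) :
    (t+1) ^ s - t ^ s ≤ s * (t+1) ^ (s-1) := by
  have hu : (0:ℝ) < t+1 := by linarith
  have hy : (0:ℝ) ≤ 1 + -(1/(t+1)) := by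
    rw [← sub_eq_add_neg, sub_nonneg, div_le_one hu]; linarith
  have hx : (-1:ℝ) ≤ -(1/(t+1)) := by linarith
  have hb := one_add_mul_self_le_rpow_one_add hx hs
  have hbase : (1 + -(1/(t+1))) * (t+1) = t := by field_simp; ring
  have h2 : t ^ s = (1 + -(1/(t+1))) ^ s * (t+1) ^ s := by
    rw [← Real.mul_rpow hy hu.le, hbase]
  have hus : (0:ℝ) < (t+1) ^ s := Real.rpow_pos_of_pos hu _
  have h4 : (1 + s * (-(1/(t+1)))) * (t+1) ^ s ≤ t ^ s := by
    rw [h2]; exact mul_le_mul_of_nonneg_right hb hus.le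
  have h3 : (t+1) ^ s * (1/(t+1)) = (t+1) ^ (s-1) := by
    rw [Real.rpow_sub hu, Real.rpow_one]; ring
  have h5 : (1 + s * (-(1/(t+1)))) * (t+1) ^ s
      = (t+1) ^ s - s * ((t+1) ^ s * (1/(t+1))) := by ring
  rw [h5, h3] at h4; linarith

/-- Reverse Bernoulli: for `0 < s ≤ 1`, `s (t+1)^{s-1} ≤ (t+1)^s − t^s`. -/
lemma bern_small {t s : ℝ} (ht : 0 ≤ t) (hs0 : 0 ≤ s) (hs1 : s ≤ 1) :
    s * (t+1) ^ (s-1) ≤ (t+1) ^ s - t ^ s := by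
  have hu : (0:ℝ) < t+1 := by linarith
  have hy : (0:ℝ) ≤ 1 + -(1/(t+1)) := by
    rw [← sub_eq_add_neg, sub_nonneg, div_le_one hu]; linarith
  have hx : (-1:ℝ) ≤ -(1/(t+1)) := by linarith
  have hb := rpow_one_add_le_one_add_mul_self hx hs0 hs1
  have hbase : (1 + -(1/(t+1))) * (t+1) = t := by field_simp; ring
  have h2 : t ^ s = (1 + -(1/(t+1))) ^ s * (t+1) ^ s := by
    rw [← Real.mul_rpow hy hu.le, hbase]
  have hus : (0:ℝ) < (t+1) ^ s := Real.rpow_pos_of_pos hu _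
  have h4 : t ^ s ≤ (1 + s * (-(1/(t+1)))) * (t+1) ^ s := by
    rw [h2]; exact mul_le_mul_of_nonneg_right hb hus.le
  have h3 : (t+1) ^ s * (1/(t+1)) = (t+1) ^ (s-1) := by
    rw [Real.rpow_sub hu, Real.rpow_one]; ring
  have h5 : (1 + s * (-(1/(t+1)))) * (t+1) ^ s
      = (t+1) ^ s - s * ((t+1) ^ s * (1/(t+1))) := by ring
  rw [h5, h3] at h4; linarith

/-- Discrete integral bound: `∑_{j=1}^N j^{s-1} ≤ s⁻¹ N^s` for `0 < s ≤ 1`. -/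
lemma sum_rpow_le {s : ℝ} (hs0 : 0 < s) (hs1 : s ≤ 1) (N : ℕ) :
    ∑ j ∈ Finset.Icc 1 N, ((j:ℝ)) ^ (s-1) ≤ s⁻¹ * (N:ℝ) ^ s := by
  induction N with
  | zero => simp [Real.zero_rpow (ne_of_gt hs0)]
  | succ n ih =>
      rw [Finset.sum_Icc_succ_top (by omega)]
      have key := bern_small (t := (n:ℝ)) (by positivity) hs0.le hs1
      have h6 : ((n:ℝ)+1) ^ (s-1) ≤ s⁻¹ * (((n:ℝ)+1) ^ s) - s⁻¹ * ((n:ℝ) ^ s) := by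
        rw [← mul_sub, le_inv_mul_iff₀ hs0]; exact key
      push_cast
      linarith [ih]

end Aux
section Aux2

open Real Finset

variable {a β : ℝ} {j : ℕ}

lemma aβ_ge (ha : 1 ≤ a) (hβ : 1 ≤ β) : 1 ≤ a * β := by nlinarith

lemma mIn_cast_pos (hj : 1 ≤ j) : (0:ℝ) < ((mIn a j : ℤ) : ℝ) := by
  exact_mod_cast mIn_pos hj
lemma mOut_cast_pos (hj : 1 ≤ j) : (0:ℝ) < ((mOut a j : ℤ) : ℝ) := by
  exact_mod_cast mOut_pos hj

lemma numer_pos (ha : 1 ≤ a) (hβ : 1 ≤ β) (hj : 1 ≤ j) :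
    (0:ℝ) < ((j:ℝ)+1) ^ (a*β) - (j:ℝ) ^ (a*β) := by
  have hb := bern_lower (t := (j:ℝ)) (jpos hj) (aβ_ge ha hβ)
  have h1 : (0:ℝ) < (j:ℝ) ^ (a*β-1) := Real.rpow_pos_of_pos (jpos hj) _
  nlinarith [aβ_ge ha hβ]

lemma lenI_pos (hj : 1 ≤ j) : 0 < lenI a β j := by
  unfold lenI
  have h1 : (0:ℝ) < (j:ℝ) ^ (a*β) := Real.rpow_pos_of_pos (jpos hj) _
  have h2 := mIn_cast_pos (a := a) hj
  positivity

lemma lenO_pos (ha : 1 ≤ a) (hβ : 1 ≤ β) (hj : 1 ≤ j) : 0 < lenO a β j :=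
  div_pos (numer_pos ha hβ hj) (mOut_cast_pos hj)

lemma lenI_ge (ha : 1 ≤ a) (hβ : 1 ≤ β) (hj : 1 ≤ j) :
    (1/2) * (j:ℝ) ^ (a*β - a) ≤ lenI a β j := by
  have hj0 := jpos hj
  have h1 : (0:ℝ) < (j:ℝ) ^ a := Real.rpow_pos_of_pos hj0 _
  have h2 := mIn_cast_pos (a := a) hj
  have h3 := mIn_le ha hj
  have key : 2 * (j:ℝ) ^ (a*β) / (2 * (j:ℝ) ^ a) ≤ lenI a β j := by
    unfold lenI
    apply div_le_div_of_nonneg_left (by positivity) h2 h3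
  calc (1/2) * (j:ℝ) ^ (a*β - a) = 2 * (j:ℝ) ^ (a*β) / (2 * (j:ℝ) ^ a) / 2 := by
        rw [Real.rpow_sub hj0]; ring
    _ ≤ lenI a β j := by
        have h4 : (0:ℝ) ≤ 2 * (j:ℝ) ^ (a*β) / (2 * (j:ℝ) ^ a) := by positivity
        linarith [key]
  
lemma lenO_ge (ha : 1 ≤ a) (hβ : 1 ≤ β) (hj : 1 ≤ j) :
    (1/2) * (j:ℝ) ^ (a*β - a) ≤ lenO a β j := by
  have hj0 := jpos hj
  have h1 : (0:ℝ) < (j:ℝ) ^ (a-1) := Real.rpow_pos_of_pos hj0 _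
  have h2 := mOut_cast_pos (a := a) hj
  have hnum : (j:ℝ) ^ (a*β-1) ≤ ((j:ℝ)+1) ^ (a*β) - (j:ℝ) ^ (a*β) := by
    have hb := bern_lower (t := (j:ℝ)) hj0 (aβ_ge ha hβ)
    have h3 : (0:ℝ) < (j:ℝ) ^ (a*β-1) := Real.rpow_pos_of_pos hj0 _
    nlinarith [aβ_ge ha hβ]
  have key : (j:ℝ) ^ (a*β-1) / (2 * (j:ℝ) ^ (a-1)) ≤ lenO a β j := by
    unfold lenO
    exact div_le_div₀ (le_of_lt (numer_pos ha hβ hj)) hnum h2 (mOut_le ha hj)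
  have heq : (1/2) * (j:ℝ) ^ (a*β-a) = (j:ℝ) ^ (a*β-1) / (2 * (j:ℝ) ^ (a-1)) := by
    rw [show a*β-a = (a*β-1) - (a-1) by ring, Real.rpow_sub hj0]; ring
  linarith [key, heq.le]

/-- Key identity: total length of the outer pieces on one side. -/
lemma mOut_mul_lenO (hj : 1 ≤ j) :
    ((mOut a j : ℤ) : ℝ) * lenO a β j = ((j:ℝ)+1) ^ (a*β) - (j:ℝ) ^ (a*β) := by
  unfold lenO
  rw [mul_div_assoc', mul_comm, mul_div_assoc, div_self (ne_of_gt (mOut_cast_pos hj)), mul_one]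

/-- Key identity: total length of the inner pieces. -/
lemma mIn_mul_lenI (hj : 1 ≤ j) :
    ((mIn a j : ℤ) : ℝ) * lenI a β j = 2 * (j:ℝ) ^ (a*β) := by
  unfold lenI
  rw [mul_div_assoc', mul_comm, mul_div_assoc, div_self (ne_of_gt (mIn_cast_pos hj)), mul_one]

end Aux2
section Aux3

open Real Finset

variable {a β : ℝ} {j : ℕ} {k : ℤ}

/-- Length of the `k`-th interval. -/
def lenIdx (a β : ℝ) (j : ℕ) (k : ℤ) : ℝ :=
  if mOut a j ≤ k ∧ k < mOut a j + mIn a j then lenI a β j else lenO a β j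

lemma lenIdx_pos (ha : 1 ≤ a) (hβ : 1 ≤ β) (hj : 1 ≤ j) : 0 < lenIdx a β j k := by
  unfold lenIdx; split
  · exact lenI_pos hj
  · exact lenO_pos ha hβ hj

lemma lenIdx_ge (ha : 1 ≤ a) (hβ : 1 ≤ β) (hj : 1 ≤ j) :
    (1/2) * (j:ℝ) ^ (a*β - a) ≤ lenIdx a β j k := by
  unfold lenIdx; split
  · exact lenI_ge ha hβ hj
  · exact lenO_ge ha hβ hj

lemma knot_eq1 (h : k ≤ mOut a j) :
    knot a β j k = -((j:ℝ)+1) ^ (a*β) + (k:ℝ) * lenO a β j := by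
  simp only [knot, if_pos h]

lemma knot_eq2 (hj : 1 ≤ j) (h1 : mOut a j ≤ k) (h2 : k ≤ mOut a j + mIn a j) :
    knot a β j k = -(j:ℝ) ^ (a*β) + ((k - mOut a j : ℤ) : ℝ) * lenI a β j := by
  rcases lt_or_eq_of_le h1 with h1' | h1'
  · simp only [knot, if_neg (not_le.mpr h1'), if_pos h2]
  · subst h1'
    simp only [knot, if_pos (le_refl _), sub_self, Int.cast_zero, zero_mul, add_zero]
    rw [mOut_mul_lenO hj]; ring
  
lemma knot_eq3 (hj : 1 ≤ j) (h : mOut a j + mIn a j ≤ k) :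
    knot a β j k = (j:ℝ) ^ (a*β) + ((k - mOut a j - mIn a j : ℤ) : ℝ) * lenO a β j := by
  rcases lt_or_eq_of_le h with h' | h'
  · have hm := mIn_pos (a := a) hj
    have h2 : ¬ (k ≤ mOut a j) := by omega
    simp only [knot, if_neg h2, if_neg (not_le.mpr h')]
  · subst h'
    have hm := mIn_pos (a := a) hj
    have h2 : ¬ (mOut a j + mIn a j ≤ mOut a j) := by omega
    simp only [knot, if_neg h2, if_pos (le_refl _)]
    have : ((mOut a j + mIn a j - mOut a j : ℤ) : ℝ) = ((mIn a j : ℤ) : ℝ) := by push_cast; ring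
    rw [this, mIn_mul_lenI hj]
    push_cast
    ring

lemma knot_succ (hj : 1 ≤ j) :
    knot a β j (k+1) = knot a β j k + lenIdx a β j k := by
  unfold lenIdx
  rcases le_or_gt (k+1) (mOut a j) with h | h
  · rw [knot_eq1 h, knot_eq1 (by omega), if_neg (by omega)]
    push_cast; ring
  · rcases lt_or_ge k (mOut a j + mIn a j) with h2 | h2
    · rw [knot_eq2 hj (by omega) (by omega), knot_eq2 hj (by omega) h2.le,
        if_pos ⟨by omega, h2⟩]
      push_cast; ring
    · rw [knot_eq3 hj (by omega), knot_eq3 hj h2, if_neg (by omega)]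
      push_cast; ring

lemma knot_lt (ha : 1 ≤ a) (hβ : 1 ≤ β) (hj : 1 ≤ j) :
    knot a β j k < knot a β j (k+1) := by
  rw [knot_succ hj]; linarith [lenIdx_pos (a := a) (β := β) (j := j) (k := k) ha hβ hj]

lemma vol_ivl (ha : 1 ≤ a) (hβ : 1 ≤ β) (hj : 1 ≤ j) :
    (volume (ivl a β j k)).toReal = lenIdx a β j k := by
  unfold ivl
  rw [Real.volume_Ico, knot_succ hj, add_sub_cancel_left,
    ENNReal.toReal_ofReal (le_of_lt (lenIdx_pos ha hβ hj))]

lemma toNat_cast_real {x : ℤ} (h : 0 ≤ x) : ((x.toNat : ℕ) : ℝ) = ((x : ℤ) : ℝ) := by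
  rw [← Int.cast_natCast, Int.toNat_of_nonneg h]

/-- Total length at level `j`. -/
lemma sum_lenIdx_full (ha : 1 ≤ a) (hβ : 1 ≤ β) (hj : 1 ≤ j) :
    ∑ k ∈ Finset.Ico (0:ℤ) (numIv a j), lenIdx a β j k = 2 * ((j:ℝ)+1) ^ (a*β) := by
  have hmI := mIn_pos (a := a) hj
  have hmO := mOut_pos (a := a) hj
  have hnum : numIv a j = mIn a j + 2*mOut a j := rfl
  have e1 : Finset.Ico (0:ℤ) (numIv a j)
      = Finset.Ico (0:ℤ) (mOut a j) ∪ Finset.Ico (mOut a j) (numIv a j) := by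
    rw [Finset.Ico_union_Ico_eq_Ico (by omega) (by unfold numIv; omega)]
  have e2 : Finset.Ico (mOut a j) (numIv a j)
      = Finset.Ico (mOut a j) (mOut a j + mIn a j)
        ∪ Finset.Ico (mOut a j + mIn a j) (numIv a j) := by
    rw [Finset.Ico_union_Ico_eq_Ico (by omega) (by unfold numIv; omega)]
  rw [e1, Finset.sum_union (Finset.Ico_disjoint_Ico_consecutive _ _ _),
    e2, Finset.sum_union (Finset.Ico_disjoint_Ico_consecutive _ _ _)]
  have c1 : ∀ k ∈ Finset.Ico (0:ℤ) (mOut a j), lenIdx a β j k = lenO a β j := by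
    intro k hk; rw [Finset.mem_Ico] at hk; exact if_neg (by omega)
  have c2 : ∀ k ∈ Finset.Ico (mOut a j) (mOut a j + mIn a j),
      lenIdx a β j k = lenI a β j := by
    intro k hk; rw [Finset.mem_Ico] at hk; exact if_pos ⟨hk.1, hk.2⟩
  have c3 : ∀ k ∈ Finset.Ico (mOut a j + mIn a j) (numIv a j),
      lenIdx a β j k = lenO a β j := by
    intro k hk; rw [Finset.mem_Ico] at hk; exact if_neg (by omega)
  rw [Finset.sum_congr rfl c1, Finset.sum_congr rfl c2, Finset.sum_congr rfl c3,
    Finset.sum_const, Finset.sum_const, Finset.sum_const, Int.card_Ico, Int.card_Ico,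
    Int.card_Ico, nsmul_eq_mul, nsmul_eq_mul, nsmul_eq_mul,
    toNat_cast_real (by omega), toNat_cast_real (by omega), toNat_cast_real (by omega)]
  have e3 : ((mOut a j - 0 : ℤ) : ℝ) = ((mOut a j : ℤ) : ℝ) := by push_cast; ring
  have e4 : ((mOut a j + mIn a j - mOut a j : ℤ) : ℝ) = ((mIn a j : ℤ) : ℝ) := by
    push_cast; ring
  have e5 : ((numIv a j - (mOut a j + mIn a j) : ℤ) : ℝ) = ((mOut a j : ℤ) : ℝ) := by
    unfold numIv; push_cast; ring
  rw [e3, e4, e5, mOut_mul_lenO hj, mIn_mul_lenI hj]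
  ring

/-- Total length of the inner part at level `j`. -/
lemma sum_lenIdx_inner (ha : 1 ≤ a) (hβ : 1 ≤ β) (hj : 1 ≤ j) :
    ∑ k ∈ Finset.Ico (mOut a j) (mOut a j + mIn a j), lenIdx a β j k
      = 2 * (j:ℝ) ^ (a*β) := by
  have hmI := mIn_pos (a := a) hj
  have hmO := mOut_pos (a := a) hj
  have c2 : ∀ k ∈ Finset.Ico (mOut a j) (mOut a j + mIn a j),
      lenIdx a β j k = lenI a β j := by
    intro k hk; rw [Finset.mem_Ico] at hk; exact if_pos ⟨hk.1, hk.2⟩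
  rw [Finset.sum_congr rfl c2, Finset.sum_const, Int.card_Ico, nsmul_eq_mul,
    toNat_cast_real (by omega)]
  have e4 : ((mOut a j + mIn a j - mOut a j : ℤ) : ℝ) = ((mIn a j : ℤ) : ℝ) := by
    push_cast; ring
  rw [e4, mIn_mul_lenI hj]

end Aux3
section Aux4

open Real Finset

variable {d : ℕ} {a : Fin d → ℝ} {nrm : (Fin d → ℝ) → ℝ}

lemma coord_lt_one (ha : ∀ i, 1 ≤ a i) (hnrm : IsAnisoNorm a nrm)
    {y : Fin d → ℝ} (h : nrm y < 1) (i : Fin d) : |y i| < 1 := by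
  by_cases hy : y = 0
  · subst hy; simp
  obtain ⟨ht, he⟩ := hnrm.2 y hy
  set t := nrm y with htdef
  have hsum : ∑ i', (aDilNeg a t y i') ^ 2 = 1 := by
    have := he
    unfold euclNorm at this
    exact Real.sqrt_eq_one.mp this
  have hsq : (aDilNeg a t y i) ^ 2 ≤ 1 := by
    rw [← hsum]
    exact Finset.single_le_sum (f := fun i' => (aDilNeg a t y i') ^ 2) (fun i' _ => sq_nonneg _) (Finset.mem_univ i)
  have habs : |aDilNeg a t y i| ≤ 1 := (sq_le_one_iff_abs_le_one _).mp hsq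
  have hz : y i = t ^ (a i) * aDilNeg a t y i := by
    unfold aDilNeg
    rw [← mul_assoc, ← Real.rpow_add ht, add_neg_cancel, Real.rpow_zero, one_mul]
  have hta : t ^ (a i) < 1 :=
    Real.rpow_lt_one ht.le h (lt_of_lt_of_le one_pos (ha i))
  have hta0 : 0 < t ^ (a i) := Real.rpow_pos_of_pos ht _
  calc |y i| = t ^ (a i) * |aDilNeg a t y i| := by
        rw [hz, abs_mul, abs_of_pos hta0]
    _ ≤ t ^ (a i) * 1 := by nlinarith
    _ < 1 := by linarith

lemma Uset_unique (ha : ∀ i, 1 ≤ a i) (hnrm : IsAnisoNorm a nrm)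
    {R : Fin d → Set ℝ} {n n' : Fin d → ℕ} {x : Fin d → ℝ}
    (hx : x ∈ Uset nrm R n) (hx' : x ∈ Uset nrm R n') : n = n' := by
  funext i
  have h1 := coord_lt_one ha hnrm hx i
  have h2 := coord_lt_one ha hnrm hx' i
  rw [abs_lt] at h1 h2
  have hpi := Real.pi_gt_three
  have key : |((n i : ℝ)) - ((n' i : ℝ))| < 1 := by
    rw [abs_lt]
    constructor <;> nlinarith [h1.1, h1.2, h2.1, h2.2]
  rw [abs_lt] at key
  have k3 : (((n i : ℤ) - (n' i : ℤ) : ℤ) : ℝ) < 1 := by push_cast; linarith [key.2]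
  have k4 : (-1 : ℝ) < (((n i : ℤ) - (n' i : ℤ) : ℤ) : ℝ) := by push_cast; linarith [key.1]
  have k5 : (n i : ℤ) - (n' i : ℤ) < 1 := by exact_mod_cast k3
  have k6 : (-1 : ℤ) < (n i : ℤ) - (n' i : ℤ) := by exact_mod_cast k4
  omega

end Aux4
section Aux5

open Real Finset

variable {d : ℕ} {a : Fin d → ℝ} {β : ℝ} {j : ℕ}

lemma rect_repr {R : Fin d → Set ℝ} (hR : R ∈ rectA a β j) :
    ∃ k : Fin d → ℤ, ∀ i, (0 ≤ k i ∧ k i < numIv (a i) j ∧ R i = ivl (a i) β j (k i)) := by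
  have h : ∀ i, ∃ k : ℤ, 0 ≤ k ∧ k < numIv (a i) j ∧ R i = ivl (a i) β j k := fun i => hR i
  choose k hk using h
  exact ⟨k, hk⟩

lemma rVol_eq_prod (ha : ∀ i, 1 ≤ a i) (hβ : 1 ≤ β) (hj : 1 ≤ j)
    {R : Fin d → Set ℝ} {k : Fin d → ℤ} (hk : ∀ i, R i = ivl (a i) β j (k i)) :
    rVol R = ∏ i, lenIdx (a i) β j (k i) := by
  unfold rVol
  exact Finset.prod_congr rfl fun i _ => by rw [hk i, vol_ivl (ha i) hβ hj]

lemma prod_len_ge (ha : ∀ i, 1 ≤ a i) (hβ : 1 ≤ β) (hj : 1 ≤ j) (k : Fin d → ℤ) :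
    (1/2:ℝ)^d * (j:ℝ) ^ (∑ i, (a i * β - a i)) ≤ ∏ i, lenIdx (a i) β j (k i) := by
  have h1 : ∀ i ∈ Finset.univ (α := Fin d),
      (1/2:ℝ) * (j:ℝ) ^ (a i * β - a i) ≤ lenIdx (a i) β j (k i) :=
    fun i _ => lenIdx_ge (ha i) hβ hj
  have h2 := Finset.prod_le_prod (s := Finset.univ (α := Fin d))
    (f := fun i => (1/2:ℝ) * (j:ℝ) ^ (a i * β - a i))
    (g := fun i => lenIdx (a i) β j (k i))
    (fun i _ => by positivity) h1
  calc (1/2:ℝ)^d * (j:ℝ) ^ (∑ i, (a i * β - a i))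
      = ∏ i : Fin d, ((1/2:ℝ) * (j:ℝ) ^ (a i * β - a i)) := by
        rw [Finset.prod_mul_distrib, Finset.prod_const, Real.rpow_sum_of_pos (jpos hj)]
        simp
    _ ≤ _ := h2

lemma sum_prod_len (ha : ∀ i, 1 ≤ a i) (hβ : 1 ≤ β) (hj : 1 ≤ j) :
    ∑ k ∈ (Fintype.piFinset fun i => Finset.Ico (0:ℤ) (numIv (a i) j)) \
          (Fintype.piFinset fun i => Finset.Ico (mOut (a i) j) (mOut (a i) j + mIn (a i) j)),
        ∏ i, lenIdx (a i) β j (k i)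
      = 2^d * (((j:ℝ)+1) ^ ((∑ i, a i) * β) - (j:ℝ) ^ ((∑ i, a i) * β)) := by
  have hsub : (Fintype.piFinset fun i => Finset.Ico (mOut (a i) j) (mOut (a i) j + mIn (a i) j))
      ⊆ (Fintype.piFinset fun i => Finset.Ico (0:ℤ) (numIv (a i) j)) := by
    apply Fintype.piFinset_subset
    intro i
    apply Finset.Ico_subset_Ico
    · exact le_of_lt (mOut_pos hj)
    · unfold numIv; have := mOut_pos (a := a i) hj; omega
  rw [Finset.sum_sdiff_eq_sub hsub, ← Finset.prod_univ_sum, ← Finset.prod_univ_sum]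
  have e1 : ∀ i : Fin d, ∑ k ∈ Finset.Ico (0:ℤ) (numIv (a i) j), lenIdx (a i) β j k
      = 2 * ((j:ℝ)+1) ^ (a i * β) := fun i => sum_lenIdx_full (ha i) hβ hj
  have e2 : ∀ i : Fin d, ∑ k ∈ Finset.Ico (mOut (a i) j) (mOut (a i) j + mIn (a i) j),
      lenIdx (a i) β j k = 2 * (j:ℝ) ^ (a i * β) := fun i => sum_lenIdx_inner (ha i) hβ hj
  rw [Finset.prod_congr rfl (fun i _ => e1 i), Finset.prod_congr rfl (fun i _ => e2 i),
    Finset.prod_mul_distrib, Finset.prod_mul_distrib, Finset.prod_const,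
    ← Real.rpow_sum_of_pos (jpos hj), ← Real.rpow_sum_of_pos (by linarith [jpos hj] : (0:ℝ) < (j:ℝ)+1),
    ← Finset.sum_mul, Finset.card_univ, Fintype.card_fin]
  ring

lemma rVol_K0 : rVol (fun _ : Fin d => Set.Ico (-1:ℝ) 1) = 2^d := by
  unfold rVol
  have h : ∀ i : Fin d, (volume ((fun _ : Fin d => Set.Ico (-1:ℝ) 1) i)).toReal = 2 := by
    intro i; rw [Real.volume_Ico]; norm_num
  rw [Finset.prod_congr rfl fun i _ => h i, Finset.prod_const, Finset.card_univ,
    Fintype.card_fin]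

end Aux5

lemma exp_ineq_aux {κ γ ν β s ε : ℝ} (hκγ : κ*γ = ν*ν) (hκν : κ = ν*(β-1))
    (hν1 : 1 ≤ ν) (hβ1 : 1 < β) (hs : s = κ*ε) :
    κ * (ε - γ - 1) + (ν*β - 1) ≤ s - 1 := by nlinarith

lemma scale_aux {u v S w : ℝ} (h : u * v ≤ S) (hw : u * w = 1) (hw0 : 0 < w) :
    v ≤ w * S := by
  calc v = w * (u * v) := by rw [show w * (u * v) = (u * w) * v by ring, hw, one_mul]
    _ ≤ w * S := mul_le_mul_of_nonneg_left h hw0.le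

set_option maxHeartbeats 1000000 in
/-- Lemma 5.2: with `β = 1/(1−α)`, for every finite
`Λ ⊂ 𝒦 × ℕ₀^d` and every `x`:
`∑_{(R,n)∈Λ} |R|^{q − ν(1−α)/α} 𝟙_{U(R,n)}(x) ≤ C · I_Λ(x)^q`, where
`I_Λ(x) = max{|R| 𝟙_{U(R,n)}(x) : (R,n) ∈ Λ}` (max over the empty set being `0`). -/
theorem stmt15 (d : ℕ) (hd : 1 ≤ d) (a : Fin d → ℝ) (ha : ∀ i, 1 ≤ a i)
    (nrm : (Fin d → ℝ) → ℝ) (hnrm : IsAnisoNorm a nrm)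
    (α : ℝ) (hα0 : 0 < α) (hα1 : α < 1) (q : ℝ) (hq : 0 < q) :
    ∃ C : ℝ, 0 < C ∧
      ∀ Λ : Finset ((Fin d → Set ℝ) × (Fin d → ℕ)),
        (∀ p ∈ Λ, p.1 ∈ rectKall a (1 / (1 - α))) →
        ∀ x : Fin d → ℝ,
          (∑ p ∈ Λ, rVol p.1 ^ (q - (∑ i, a i) * (1 - α) / α) *
              (Uset nrm p.1 p.2).indicator (fun _ => (1 : ℝ)) x) ≤
          C * (⨆ p ∈ Λ,
              rVol p.1 * (Uset nrm p.1 p.2).indicator (fun _ => (1 : ℝ)) x) ^ q := by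
  classical
  have h1α : 0 < 1 - α := by linarith
  set β : ℝ := 1 / (1 - α) with hβdef
  have hβ1 : 1 < β := by rw [hβdef, lt_div_iff₀ h1α]; nlinarith
  set ν : ℝ := ∑ i, a i with hνdef
  have hν1 : (1:ℝ) ≤ ν := by
    calc (1:ℝ) ≤ (d:ℝ) := by exact_mod_cast hd
      _ = ∑ _i : Fin d, (1:ℝ) := by simp
      _ ≤ ν := Finset.sum_le_sum fun i _ => ha i
  set γ : ℝ := ν * (1 - α) / α with hγdef
  have hγ0 : 0 < γ := by rw [hγdef]; positivity
  set κ : ℝ := ∑ i, (a i * β - a i) with hκdef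
  have hκν : κ = ν * (β - 1) := by
    rw [hκdef, hνdef, Finset.sum_mul]
    exact Finset.sum_congr rfl fun i _ => by ring
  have hκ0 : 0 < κ := by rw [hκν]; nlinarith
  have hβm1 : β - 1 = α * β := by rw [hβdef]; field_simp; ring
  have hκγ : κ * γ = ν * ν := by
    rw [hκν, hγdef, hβdef]; field_simp; ring
  set ε : ℝ := min q (min 1 κ⁻¹) / 2 with hεdef
  have hε0 : 0 < ε := by
    rw [hεdef]; have : 0 < κ⁻¹ := by positivity
    have h2 : 0 < min q (min 1 κ⁻¹) := lt_min hq (lt_min one_pos this)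
    positivity
  have hεq : ε ≤ q := by
    rw [hεdef]
    have := min_le_left q (min 1 κ⁻¹); linarith [hq]
  set s : ℝ := κ * ε with hsdef
  have hs0 : 0 < s := by rw [hsdef]; positivity
  have hs1 : s ≤ 1 := by
    rw [hsdef, hεdef]
    have h1 : min q (min 1 κ⁻¹) ≤ κ⁻¹ := le_trans (min_le_right _ _) (min_le_right _ _)
    have h2 : κ * (κ⁻¹ / 2) = 1/2 := by field_simp
    nlinarith
  have hνβ1 : (1:ℝ) ≤ ν * β := by nlinarith
  -- Constants
  set C1 : ℝ := 2^d * (ν * β * 2 ^ (ν*β - 1)) with hC1def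
  have hC1 : 0 < C1 := by
    rw [hC1def]
    have : (0:ℝ) < 2 ^ (ν*β-1) := Real.rpow_pos_of_pos two_pos _
    positivity
  set c2 : ℝ := ((1/2:ℝ)^d) ^ (ε - γ - 1) with hc2def
  have hc2 : 0 < c2 := by
    rw [hc2def]; apply Real.rpow_pos_of_pos; positivity
  set C0 : ℝ := ((2:ℝ)^d) ^ (-γ) with hC0def
  have hC0 : 0 < C0 := by rw [hC0def]; apply Real.rpow_pos_of_pos; positivity
  set Cfin : ℝ := C0 + c2 * C1 * s⁻¹ * ((2:ℝ)^d) ^ ε with hCdef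
  have hCfin : 0 < Cfin := by
    rw [hCdef]
    have h3 : (0:ℝ) < ((2:ℝ)^d) ^ ε := Real.rpow_pos_of_pos (by positivity) _
    positivity
  refine ⟨Cfin, hCfin, fun Λ hΛ x => ?_⟩
  set g : ((Fin d → Set ℝ) × (Fin d → ℕ)) → ℝ :=
    fun p => rVol p.1 * (Uset nrm p.1 p.2).indicator (fun _ => (1:ℝ)) x with hgdef
  set f : ((Fin d → Set ℝ) × (Fin d → ℕ)) → ℝ :=
    fun p => rVol p.1 ^ (q - γ) * (Uset nrm p.1 p.2).indicator (fun _ => (1:ℝ)) x with hfdef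
  set S : ℝ := ⨆ p, ⨆ _ : p ∈ Λ, g p with hSdef
  have hg0 : ∀ p, 0 ≤ g p := by
    intro p
    rw [hgdef]
    apply mul_nonneg
    · exact Finset.prod_nonneg fun i _ => ENNReal.toReal_nonneg
    · exact Set.indicator_nonneg (fun _ _ => zero_le_one) _
  have hval : ∀ p, (⨆ _ : p ∈ Λ, g p) = if p ∈ Λ then g p else 0 := by
    intro p
    by_cases h : p ∈ Λ
    · haveI : Nonempty (p ∈ Λ) := ⟨h⟩
      rw [if_pos h]; exact ciSup_const
    · haveI : IsEmpty (p ∈ Λ) := ⟨h⟩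
      rw [if_neg h]; exact Real.iSup_of_isEmpty _
  have hSb : BddAbove (Set.range fun p => ⨆ _ : p ∈ Λ, g p) := by
    apply Set.Finite.bddAbove
    apply Set.Finite.subset (Set.Finite.insert (0:ℝ) ((Λ.finite_toSet).image g))
    rintro r ⟨p, rfl⟩
    simp only [hval p]
    split
    · exact Set.mem_insert_of_mem _ ⟨p, by assumption, rfl⟩
    · exact Set.mem_insert _ _
  have hgS : ∀ p ∈ Λ, g p ≤ S := by
    intro p hp
    have h1 := le_ciSup hSb p
    rw [hval p, if_pos hp] at h1
    exact h1
  have hS0 : 0 ≤ S := by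
    have h1 := le_ciSup hSb (Classical.arbitrary _)
    rw [hval _] at h1
    split at h1
    · exact le_trans (hg0 _) h1
    · exact h1
  -- restrict to pairs whose indicator is 1
  set P : Finset ((Fin d → Set ℝ) × (Fin d → ℕ)) :=
    Λ.filter (fun p => x ∈ Uset nrm p.1 p.2) with hPdef
  have hsumP : ∑ p ∈ Λ, f p = ∑ p ∈ P, f p := by
    rw [hPdef]
    refine (Finset.sum_filter_of_ne ?_).symm
    intro p _ hfp
    by_contra hx
    rw [hfdef] at hfp
    simp only [Set.indicator_of_notMem hx, mul_zero] at hfp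
    exact hfp rfl
  have hPmem : ∀ p ∈ P, p ∈ Λ ∧ x ∈ Uset nrm p.1 p.2 := by
    intro p hp; rw [hPdef, Finset.mem_filter] at hp; exact hp
  have hfP : ∀ p ∈ P, f p = rVol p.1 ^ (q - γ) := by
    intro p hp
    rw [hfdef]
    simp only [Set.indicator_of_mem (hPmem p hp).2, mul_one]
  have hgP : ∀ p ∈ P, g p = rVol p.1 := by
    intro p hp
    rw [hgdef]
    simp only [Set.indicator_of_mem (hPmem p hp).2, mul_one]
  -- the level function
  set lev : ((Fin d → Set ℝ) × (Fin d → ℕ)) → ℕ := fun p =>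
    if p.1 ∈ rectK0 d then 0
    else if h : ∃ j, 1 ≤ j ∧ p.1 ∈ rectK a β j then h.choose else 0 with hlevdef
  have hlev : ∀ p ∈ P, (lev p = 0 ∧ p.1 = fun _ => Set.Ico (-1:ℝ) 1) ∨
      (1 ≤ lev p ∧ p.1 ∈ rectK a β (lev p)) := by
    intro p hp
    have hall := hΛ p (hPmem p hp).1
    by_cases h0 : p.1 ∈ rectK0 d
    · left
      constructor
      · simp only [hlevdef, if_pos h0]
      · exact h0
    · right
      have hex : ∃ j, 1 ≤ j ∧ p.1 ∈ rectK a β j := by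
        rcases hall with h | h
        · exact absurd h h0
        · rw [Set.mem_iUnion₂] at h
          obtain ⟨j, hj, hjm⟩ := h
          exact ⟨j, hj, hjm⟩
      have : lev p = hex.choose := by simp only [hlevdef, if_neg h0, dif_pos hex]
      rw [this]
      exact hex.choose_spec
  -- lower bound on S from any populated level
  have hLS : ∀ j : ℕ, 1 ≤ j → ∀ p ∈ P, p.1 ∈ rectK a β j →
      (1/2:ℝ)^d * (j:ℝ) ^ κ ≤ S := by
    intro j hj1 p hpP hpK
    obtain ⟨k, hk⟩ := rect_repr hpK.1
    have h1 : rVol p.1 = ∏ i, lenIdx (a i) β j (k i) :=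
      rVol_eq_prod ha hβ1.le hj1 (fun i => (hk i).2.2)
    have h2 : (1/2:ℝ)^d * (j:ℝ) ^ (∑ i, (a i * β - a i)) ≤ ∏ i, lenIdx (a i) β j (k i) :=
      prod_len_ge ha hβ1.le hj1 k
    have h3 := hgS p (hPmem p hpP).1
    rw [hgP p hpP] at h3
    rw [hκdef]
    calc (1/2:ℝ)^d * (j:ℝ) ^ (∑ i, (a i * β - a i)) ≤ ∏ i, lenIdx (a i) β j (k i) := h2
      _ = rVol p.1 := h1.symm
      _ ≤ S := h3
  -- fiber decomposition
  set T : Finset ℕ := P.image lev with hTdef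
  have hfib : ∑ p ∈ P, f p = ∑ j ∈ T, ∑ p ∈ P.filter (fun p => lev p = j), f p := by
    rw [hTdef]
    exact (Finset.sum_fiberwise_of_maps_to (fun p hp => Finset.mem_image_of_mem lev hp) f).symm
  have hε1 : ε ≤ 1/2 := by
    rw [hεdef]
    have h1 := min_le_left (1:ℝ) κ⁻¹
    have h2 := min_le_right q (min 1 κ⁻¹)
    linarith
  -- level 0 fiber
  have hFib0 : ∑ p ∈ P.filter (fun p => lev p = 0), f p ≤ C0 * S ^ q := by
    have hC0Sq : 0 ≤ C0 * S ^ q := mul_nonneg hC0.le (Real.rpow_nonneg hS0 _)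
    rcases Finset.eq_empty_or_nonempty (P.filter (fun p => lev p = 0)) with he | ⟨p0, hp0⟩
    · rw [he, Finset.sum_empty]; exact hC0Sq
    · have hmem0 : ∀ p ∈ P.filter (fun p => lev p = 0),
          p ∈ P ∧ p.1 = (fun _ => Set.Ico (-1:ℝ) 1) := by
        intro p hp
        rw [Finset.mem_filter] at hp
        refine ⟨hp.1, ?_⟩
        rcases hlev p hp.1 with ⟨_, h⟩ | ⟨h1, _⟩
        · exact h
        · omega
      have hsingle : P.filter (fun p => lev p = 0) = {p0} := by
        rw [Finset.eq_singleton_iff_unique_mem]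
        refine ⟨hp0, fun p hp => ?_⟩
        have hR : p.1 = p0.1 := ((hmem0 p hp).2).trans ((hmem0 p0 hp0).2).symm
        have hx2 := (hPmem p0 (hmem0 p0 hp0).1).2
        rw [← hR] at hx2
        exact Prod.ext hR (Uset_unique ha hnrm (hPmem p (hmem0 p hp).1).2 hx2)
      rw [hsingle, Finset.sum_singleton]
      have hvol : rVol p0.1 = 2^d := by rw [(hmem0 p0 hp0).2]; exact rVol_K0
      rw [hfP p0 (hmem0 p0 hp0).1, hvol]
      have hSge : (2:ℝ)^d ≤ S := by
        have h1 := hgS p0 (hPmem p0 (hmem0 p0 hp0).1).1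
        rw [hgP p0 (hmem0 p0 hp0).1, hvol] at h1
        exact h1
      have h2d : (0:ℝ) < 2^d := by positivity
      calc ((2:ℝ)^d) ^ (q - γ) = ((2:ℝ)^d) ^ (-γ) * ((2:ℝ)^d) ^ q := by
            rw [← Real.rpow_add h2d]; congr 1; ring
        _ ≤ C0 * S ^ q := by
            rw [hC0def]
            exact mul_le_mul_of_nonneg_left
              (Real.rpow_le_rpow h2d.le hSge hq.le) (Real.rpow_pos_of_pos h2d _).le
  -- level j ≥ 1 fibers
  have hFibj : ∀ j ∈ T, 1 ≤ j → ∑ p ∈ P.filter (fun p => lev p = j), f p ≤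
      c2 * C1 * S ^ (q - ε) * (j:ℝ) ^ (s - 1) := by
    intro j hjT hj1
    set Q := P.filter (fun p => lev p = j) with hQdef
    have hQmem : ∀ p ∈ Q, p ∈ P ∧ p.1 ∈ rectK a β j := by
      intro p hp
      rw [hQdef, Finset.mem_filter] at hp
      obtain ⟨hpP, hplev⟩ := hp
      refine ⟨hpP, ?_⟩
      rcases hlev p hpP with ⟨h0, _⟩ | ⟨_, h⟩
      · omega
      · rwa [hplev] at h
    set φ : ((Fin d → Set ℝ) × (Fin d → ℕ)) → (Fin d → ℤ) := fun p =>
      if h : ∃ k : Fin d → ℤ, ∀ i, (0 ≤ k i ∧ k i < numIv (a i) j ∧ p.1 i = ivl (a i) β j (k i))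
      then h.choose else fun _ => 0 with hφdef
    have hφspec : ∀ p ∈ Q, ∀ i,
        0 ≤ φ p i ∧ φ p i < numIv (a i) j ∧ p.1 i = ivl (a i) β j (φ p i) := by
      intro p hp
      have hex := rect_repr ((hQmem p hp).2).1
      have he : φ p = hex.choose := by simp only [hφdef, dif_pos hex]
      rw [he]
      exact hex.choose_spec
    have hrVol : ∀ p ∈ Q, rVol p.1 = ∏ i, lenIdx (a i) β j (φ p i) := by
      intro p hp
      exact rVol_eq_prod ha hβ1.le hj1 (fun i => ((hφspec p hp i).2).2)
    set L : ℝ := (1/2:ℝ)^d * (j:ℝ) ^ κ with hLdef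
    have hjκ : (0:ℝ) < (j:ℝ) ^ κ := Real.rpow_pos_of_pos (jpos hj1) κ
    have hL0 : 0 < L := by rw [hLdef]; positivity
    have hrL : ∀ p ∈ Q, L ≤ rVol p.1 := by
      intro p hp
      rw [hrVol p hp, hLdef, hκdef]
      exact prod_len_ge ha hβ1.le hj1 (φ p)
    have hrS : ∀ p ∈ Q, rVol p.1 ≤ S := by
      intro p hp
      have h1 := hgS p (hPmem p (hQmem p hp).1).1
      rwa [hgP p (hQmem p hp).1] at h1
    have hSLnn : 0 ≤ S ^ (q - ε) * L ^ (ε - γ - 1) :=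
      mul_nonneg (Real.rpow_nonneg hS0 _) (Real.rpow_nonneg hL0.le _)
    have hterm : ∀ p ∈ Q, f p ≤ S ^ (q - ε) * L ^ (ε - γ - 1) * rVol p.1 := by
      intro p hp
      rw [hfP p (hQmem p hp).1]
      have hr0 : 0 < rVol p.1 := lt_of_lt_of_le hL0 (hrL p hp)
      have e1 : rVol p.1 ^ (q - γ)
          = rVol p.1 ^ (q - ε) * rVol p.1 ^ (ε - γ - 1) * rVol p.1 ^ (1:ℝ) := by
        rw [← Real.rpow_add hr0, ← Real.rpow_add hr0]
        congr 1; ring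
      rw [e1, Real.rpow_one]
      have h1 : rVol p.1 ^ (q - ε) ≤ S ^ (q - ε) :=
        Real.rpow_le_rpow hr0.le (hrS p hp) (by linarith only [hεq])
      have h2 : rVol p.1 ^ (ε - γ - 1) ≤ L ^ (ε - γ - 1) :=
        Real.rpow_le_rpow_of_nonpos hL0 (hrL p hp) (by linarith only [hε1, hγ0])
      have h3 : rVol p.1 ^ (q - ε) * rVol p.1 ^ (ε - γ - 1)
          ≤ S ^ (q - ε) * L ^ (ε - γ - 1) :=
        mul_le_mul h1 h2 (Real.rpow_nonneg hr0.le _) (Real.rpow_nonneg hS0 _)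
      exact mul_le_mul_of_nonneg_right h3 hr0.le
    have hinj : ∀ p ∈ Q, ∀ p' ∈ Q, φ p = φ p' → p = p' := by
      intro p hp p' hp' he
      have hR : p.1 = p'.1 := by
        funext i
        rw [((hφspec p hp i).2).2, ((hφspec p' hp' i).2).2, he]
      have hx2 := (hPmem p' (hQmem p' hp').1).2
      rw [← hR] at hx2
      exact Prod.ext hR (Uset_unique ha hnrm (hPmem p (hQmem p hp).1).2 hx2)
    have hsub : Q.image φ ⊆
        (Fintype.piFinset fun i => Finset.Ico (0:ℤ) (numIv (a i) j)) \
        (Fintype.piFinset fun i => Finset.Ico (mOut (a i) j) (mOut (a i) j + mIn (a i) j)) := by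
      intro k hk
      obtain ⟨p, hp, rfl⟩ := Finset.mem_image.mp hk
      rw [Finset.mem_sdiff]
      constructor
      · rw [Fintype.mem_piFinset]
        intro i
        rw [Finset.mem_Ico]
        exact ⟨(hφspec p hp i).1, ((hφspec p hp i).2).1⟩
      · intro hB
        rw [Fintype.mem_piFinset] at hB
        have hBmem : p.1 ∈ rectB a β j := by
          intro i
          have hBi := hB i
          rw [Finset.mem_Ico] at hBi
          exact ⟨φ p i, ⟨hBi.1, hBi.2⟩, ((hφspec p hp i).2).2⟩
        exact ((hQmem p hp).2).2 hBmem
    have hsumr : ∑ p ∈ Q, rVol p.1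
        ≤ 2^d * (((j:ℝ)+1) ^ (ν*β) - (j:ℝ) ^ (ν*β)) := by
      calc ∑ p ∈ Q, rVol p.1 = ∑ p ∈ Q, ∏ i, lenIdx (a i) β j (φ p i) :=
            Finset.sum_congr rfl hrVol
        _ = ∑ k ∈ Q.image φ, ∏ i, lenIdx (a i) β j (k i) := by
            rw [Finset.sum_image hinj]
        _ ≤ ∑ k ∈ (Fintype.piFinset fun i => Finset.Ico (0:ℤ) (numIv (a i) j)) \
              (Fintype.piFinset fun i => Finset.Ico (mOut (a i) j) (mOut (a i) j + mIn (a i) j)),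
              ∏ i, lenIdx (a i) β j (k i) :=
            Finset.sum_le_sum_of_subset_of_nonneg hsub
              (fun k _ _ => Finset.prod_nonneg fun i _ => (lenIdx_pos (ha i) hβ1.le hj1).le)
        _ = 2^d * (((j:ℝ)+1) ^ (ν*β) - (j:ℝ) ^ (ν*β)) := by
            rw [sum_prod_len ha hβ1.le hj1, hνdef]
    have hVbound : 2^d * (((j:ℝ)+1) ^ (ν*β) - (j:ℝ) ^ (ν*β)) ≤ C1 * (j:ℝ) ^ (ν*β - 1) := by
      have h1 := bern_upper (t := (j:ℝ)) (jpos hj1).le hνβ1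
      have h2 : ((j:ℝ)+1) ^ (ν*β-1) ≤ 2 ^ (ν*β-1) * (j:ℝ) ^ (ν*β-1) := by
        rw [← Real.mul_rpow (by norm_num) (jpos hj1).le]
        exact Real.rpow_le_rpow (by positivity) (by linarith only [jone hj1])
          (by linarith only [hνβ1])
      have hνβ0 : (0:ℝ) ≤ ν * β := by linarith only [hνβ1]
      calc 2^d * (((j:ℝ)+1) ^ (ν*β) - (j:ℝ) ^ (ν*β))
          ≤ 2^d * (ν * β * ((j:ℝ)+1) ^ (ν*β-1)) := by
            apply mul_le_mul_of_nonneg_left h1 (by positivity)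
        _ ≤ 2^d * (ν * β * (2 ^ (ν*β-1) * (j:ℝ) ^ (ν*β-1))) := by
            apply mul_le_mul_of_nonneg_left
              (mul_le_mul_of_nonneg_left h2 hνβ0) (by positivity)
        _ = C1 * (j:ℝ) ^ (ν*β - 1) := by rw [hC1def]; ring
    have hLpow : L ^ (ε - γ - 1) = c2 * (j:ℝ) ^ (κ * (ε - γ - 1)) := by
      rw [hLdef, Real.mul_rpow (by positivity) hjκ.le, ← Real.rpow_mul (jpos hj1).le, hc2def]
    have hexp : κ * (ε - γ - 1) + (ν*β - 1) ≤ s - 1 :=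
      exp_ineq_aux hκγ hκν hν1 hβ1 hsdef
    calc ∑ p ∈ Q, f p ≤ ∑ p ∈ Q, S ^ (q-ε) * L ^ (ε-γ-1) * rVol p.1 :=
          Finset.sum_le_sum hterm
      _ = S ^ (q-ε) * L ^ (ε-γ-1) * ∑ p ∈ Q, rVol p.1 := by rw [← Finset.mul_sum]
      _ ≤ S ^ (q-ε) * L ^ (ε-γ-1) * (C1 * (j:ℝ) ^ (ν*β-1)) :=
          mul_le_mul_of_nonneg_left (le_trans hsumr hVbound) hSLnn
      _ = c2 * C1 * S ^ (q-ε) * ((j:ℝ) ^ (κ*(ε-γ-1)) * (j:ℝ) ^ (ν*β-1)) := by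
          rw [hLpow]; ring
      _ = c2 * C1 * S ^ (q-ε) * (j:ℝ) ^ (κ*(ε-γ-1) + (ν*β-1)) := by
          rw [← Real.rpow_add (jpos hj1)]
      _ ≤ c2 * C1 * S ^ (q-ε) * (j:ℝ) ^ (s-1) := by
          apply mul_le_mul_of_nonneg_left
            (Real.rpow_le_rpow_of_exponent_le (jone hj1) hexp)
          exact mul_nonneg (mul_nonneg hc2.le hC1.le) (Real.rpow_nonneg hS0 _)
  -- bound on populated levels
  set N : ℕ := ⌊((2:ℝ)^d * S) ^ κ⁻¹⌋₊ with hNdef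
  have hTN : ∀ j ∈ T, 1 ≤ j → (j:ℝ) ≤ ((2:ℝ)^d * S) ^ κ⁻¹ := by
    intro j hjT hj1
    rw [hTdef] at hjT
    obtain ⟨p, hpP, hplev⟩ := Finset.mem_image.mp hjT
    have hpK : p.1 ∈ rectK a β j := by
      rcases hlev p hpP with ⟨h0, _⟩ | ⟨h1, h2⟩
      · omega
      · rwa [hplev] at h2
    have h4 := hLS j hj1 p hpP hpK
    have hjκ : (0:ℝ) < (j:ℝ) ^ κ := Real.rpow_pos_of_pos (jpos hj1) κ
    have h5 : (j:ℝ) ^ κ ≤ (2:ℝ)^d * S := by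
      have hhalf : ((1/2:ℝ)^d) * ((2:ℝ)^d) = 1 := by
        rw [← mul_pow]; norm_num
      have hpow : (0:ℝ) < (2:ℝ)^d := by positivity
      exact scale_aux h4 hhalf hpow
    calc (j:ℝ) = ((j:ℝ) ^ κ) ^ κ⁻¹ := by
          rw [← Real.rpow_mul (jpos hj1).le, mul_inv_cancel₀ (ne_of_gt hκ0), Real.rpow_one]
      _ ≤ ((2:ℝ)^d * S) ^ κ⁻¹ := Real.rpow_le_rpow hjκ.le h5 (by positivity)
  -- assemble
  have part1 : ∑ j ∈ T.filter (fun j => j = 0), ∑ p ∈ P.filter (fun p => lev p = j), f p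
      ≤ C0 * S ^ q := by
    by_cases h0T : 0 ∈ T
    · have he : T.filter (fun j => j = 0) = {0} := by
        ext m
        simp only [Finset.mem_filter, Finset.mem_singleton]
        exact ⟨fun h => h.2, fun h => ⟨h ▸ h0T, h⟩⟩
      rw [he, Finset.sum_singleton]
      exact hFib0
    · have he : T.filter (fun j => j = 0) = ∅ := by
        rw [Finset.filter_eq_empty_iff]
        intro m hm hm0
        exact h0T (hm0 ▸ hm)
      rw [he, Finset.sum_empty]
      exact mul_nonneg hC0.le (Real.rpow_nonneg hS0 _)
  have part2 : ∑ j ∈ T.filter (fun j => ¬ j = 0), ∑ p ∈ P.filter (fun p => lev p = j), f p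
      ≤ c2 * C1 * s⁻¹ * ((2:ℝ)^d) ^ ε * S ^ q := by
    have hsub2 : T.filter (fun j => ¬ j = 0) ⊆ Finset.Icc 1 N := by
      intro j hj
      rw [Finset.mem_filter] at hj
      have hj1 : 1 ≤ j := Nat.one_le_iff_ne_zero.mpr hj.2
      rw [Finset.mem_Icc]
      exact ⟨hj1, Nat.le_floor (hTN j hj.1 hj1)⟩
    have hcc : 0 ≤ c2 * C1 * S ^ (q-ε) :=
      mul_nonneg (mul_nonneg hc2.le hC1.le) (Real.rpow_nonneg hS0 _)
    have hNs : ((N:ℝ)) ^ s ≤ ((2:ℝ)^d) ^ ε * S ^ ε := by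
      have harg : (0:ℝ) ≤ (2:ℝ)^d * S := mul_nonneg (by positivity) hS0
      have hNle : (N:ℝ) ≤ ((2:ℝ)^d * S) ^ κ⁻¹ := Nat.floor_le (Real.rpow_nonneg harg _)
      calc ((N:ℝ)) ^ s ≤ (((2:ℝ)^d * S) ^ κ⁻¹) ^ s :=
            Real.rpow_le_rpow (Nat.cast_nonneg N) hNle hs0.le
        _ = ((2:ℝ)^d * S) ^ (κ⁻¹ * s) := by rw [← Real.rpow_mul harg]
        _ = ((2:ℝ)^d * S) ^ ε := by
            congr 1
            rw [hsdef]
            field_simp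
        _ = ((2:ℝ)^d) ^ ε * S ^ ε := Real.mul_rpow (by positivity) hS0
    calc ∑ j ∈ T.filter (fun j => ¬ j = 0), ∑ p ∈ P.filter (fun p => lev p = j), f p
        ≤ ∑ j ∈ T.filter (fun j => ¬ j = 0), c2 * C1 * S ^ (q-ε) * (j:ℝ) ^ (s-1) := by
          apply Finset.sum_le_sum
          intro j hj
          rw [Finset.mem_filter] at hj
          exact hFibj j hj.1 (Nat.one_le_iff_ne_zero.mpr hj.2)
      _ ≤ ∑ j ∈ Finset.Icc 1 N, c2 * C1 * S ^ (q-ε) * (j:ℝ) ^ (s-1) := by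
          apply Finset.sum_le_sum_of_subset_of_nonneg hsub2
          intro j hj _
          exact mul_nonneg hcc (Real.rpow_nonneg (Nat.cast_nonneg j) _)
      _ = c2 * C1 * S ^ (q-ε) * ∑ j ∈ Finset.Icc 1 N, (j:ℝ) ^ (s-1) := by
          rw [Finset.mul_sum]
      _ ≤ c2 * C1 * S ^ (q-ε) * (s⁻¹ * (N:ℝ) ^ s) :=
          mul_le_mul_of_nonneg_left (sum_rpow_le hs0 hs1 N) hcc
      _ ≤ c2 * C1 * S ^ (q-ε) * (s⁻¹ * (((2:ℝ)^d) ^ ε * S ^ ε)) := by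
          apply mul_le_mul_of_nonneg_left
            (mul_le_mul_of_nonneg_left hNs (by positivity)) hcc
      _ = c2 * C1 * s⁻¹ * ((2:ℝ)^d) ^ ε * (S ^ (q-ε) * S ^ ε) := by ring
      _ = c2 * C1 * s⁻¹ * ((2:ℝ)^d) ^ ε * S ^ q := by
          rw [← Real.rpow_add_of_nonneg hS0 (by linarith only [hεq, hε0]) hε0.le, sub_add_cancel]
  calc ∑ p ∈ Λ, f p = ∑ p ∈ P, f p := hsumP
    _ = ∑ j ∈ T, ∑ p ∈ P.filter (fun p => lev p = j), f p := hfib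
    _ = (∑ j ∈ T.filter (fun j => j = 0), ∑ p ∈ P.filter (fun p => lev p = j), f p)
        + ∑ j ∈ T.filter (fun j => ¬ j = 0), ∑ p ∈ P.filter (fun p => lev p = j), f p :=
        (Finset.sum_filter_add_sum_filter_not T _ _).symm
    _ ≤ C0 * S ^ q + c2 * C1 * s⁻¹ * ((2:ℝ)^d) ^ ε * S ^ q := add_le_add part1 part2
    _ = Cfin * S ^ q := by rw [hCdef]; ring
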